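/- Let $\overline{X}, \overline{S} \in \mathbb{S}^n_+$ with $\langle \overline{X}, \overline{S}\rangle = 0$. Then $0 \in \overline{X} + \mathrm{ri}(\mathcal{N}_{\mathbb{S}^n_+}(\overline{S}))$, i.e., $-\overline{X}$ lies in the relative interior of the normal cone of $\mathbb{S}^n_+$ at $\overline{S}$, if and only if $\mathrm{rank}(\overline{X}) + \mathrm{rank}(\overline{S}) = n$. -/

import Mathlib

open Matrix

lemma psd_diag_nonneg {n : ℕ} {A : Matrix (Fin n) (Fin n) ℝ} (hA : A.PosSemidef) (i : Fin n) :
    0 ≤ A i i := by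
  have := hA.dotProduct_mulVec_nonneg (Pi.single i 1)
  simpa [dotProduct, mulVec, Pi.single_apply] using this

lemma psd_trace_nonneg {n : ℕ} {A : Matrix (Fin n) (Fin n) ℝ} (hA : A.PosSemidef) :
    0 ≤ Matrix.trace A :=
  Finset.sum_nonneg fun i _ => psd_diag_nonneg hA i

open scoped MatrixOrder in
lemma psd_trace_mul_nonneg {n : ℕ} {A B : Matrix (Fin n) (Fin n) ℝ} (hA : A.PosSemidef) (hB : B.PosSemidef) :
    0 ≤ Matrix.trace (A * B) := by
  obtain ⟨C, rfl⟩ := CStarAlgebra.nonneg_iff_eq_star_mul_self.mp hA.nonneg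
  rw [Matrix.mul_assoc, Matrix.trace_mul_comm]
  exact psd_trace_nonneg (hB.mul_mul_conjTranspose_same C)

lemma trace_transpose_mul_self_zero {n : ℕ} {M : Matrix (Fin n) (Fin n) ℝ}
    (h : Matrix.trace (Mᴴ * M) = 0) : M = 0 := by
  have h2 : Matrix.trace (Mᴴ * M) = ∑ j, ∑ i, (M i j)^2 := by
    simp [Matrix.trace, Matrix.mul_apply, Matrix.diag, sq]
  rw [h2] at h
  ext i j
  have := (Finset.sum_eq_zero_iff_of_nonneg (fun j _ => Finset.sum_nonneg fun i _ => sq_nonneg (M i j))).mp h j (Finset.mem_univ j)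
  have := (Finset.sum_eq_zero_iff_of_nonneg (fun i _ => sq_nonneg (M i j))).mp this i (Finset.mem_univ i)
  simpa [pow_eq_zero_iff] using this

open scoped MatrixOrder in
lemma psd_mul_eq_zero_of_trace_zero {n : ℕ} {A B : Matrix (Fin n) (Fin n) ℝ}
    (hA : A.PosSemidef) (hB : B.PosSemidef) (h : Matrix.trace (A * B) = 0) : A * B = 0 := by
  set C := CFC.sqrt A with hC
  set D := CFC.sqrt B with hD
  have hCC : C * C = A := CFC.sqrt_mul_sqrt_self A hA.nonneg
  have hDD : D * D = B := CFC.sqrt_mul_sqrt_self B hB.nonneg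
  have hCh : Cᴴ = C := IsSelfAdjoint.of_nonneg (CFC.sqrt_nonneg A)
  have hDh : Dᴴ = D := IsSelfAdjoint.of_nonneg (CFC.sqrt_nonneg B)
  have key : (C * D) = 0 := by
    apply trace_transpose_mul_self_zero
    have e1 : (C * D)ᴴ * (C * D) = D * ((C * C) * D) := by
      rw [Matrix.conjTranspose_mul, hCh, hDh]; noncomm_ring
    rw [e1, hCC, Matrix.trace_mul_comm, Matrix.mul_assoc, hDD]
    exact h
  calc A * B = C * (C * D) * D := by rw [← hCC, ← hDD]; noncomm_ring
  _ = 0 := by rw [key]; simp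

lemma herm_iff_symm {n : ℕ} {A : Matrix (Fin n) (Fin n) ℝ} : A.IsHermitian ↔ A.IsSymm := by
  rw [Matrix.IsHermitian, Matrix.conjTranspose_eq_transpose_of_trivial, Matrix.IsSymm]

lemma trace_mul_vecMulVec {n : ℕ} (H : Matrix (Fin n) (Fin n) ℝ) (v : Fin n → ℝ) :
    Matrix.trace (H * Matrix.vecMulVec v v) = v ⬝ᵥ (H *ᵥ v) := by
  simp only [Matrix.trace, Matrix.diag, Matrix.mul_apply, Matrix.vecMulVec_apply,
    Matrix.mulVec, dotProduct, Finset.mul_sum]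
  congr 1; ext i; congr 1; ext j; ring

lemma psd_vecMulVec {n : ℕ} (v : Fin n → ℝ) : (Matrix.vecMulVec v v).PosSemidef := by
  refine Matrix.PosSemidef.of_dotProduct_mulVec_nonneg ?_ ?_
  · rw [herm_iff_symm]
    ext i j
    simp [Matrix.vecMulVec_apply, Matrix.transpose_apply, mul_comm]
  · intro x
    have : x ⬝ᵥ (Matrix.vecMulVec v v *ᵥ x) = (v ⬝ᵥ x) ^ 2 := by
      simp only [Matrix.mulVec, dotProduct, Matrix.vecMulVec_apply, sq, Finset.mul_sum,
        Finset.sum_mul]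
      congr 1; ext i; congr 1; ext j; ring
    simp only [star_trivial]
    rw [this]
    positivity

/-- The normal cone (in the ambient space `𝕊ⁿ` of symmetric matrices) of a set `D` of
symmetric matrices at a point `x`. -/
def matNormalCone {n : ℕ} (D : Set (Matrix (Fin n) (Fin n) ℝ))
    (x : Matrix (Fin n) (Fin n) ℝ) : Set (Matrix (Fin n) (Fin n) ℝ) :=
  {H | H.IsSymm ∧ ∀ z ∈ D, Matrix.trace (Hᵀ * (z - x)) ≤ 0}

lemma normalCone_eq {n : ℕ} {S : Matrix (Fin n) (Fin n) ℝ} (hS : S.PosSemidef) :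
    matNormalCone {Y : Matrix (Fin n) (Fin n) ℝ | Y.PosSemidef} S =
      {H | H.IsSymm ∧ (-H).PosSemidef ∧ H * S = 0} := by
  ext H
  constructor
  · rintro ⟨hsym, hle⟩
    have hHT : Hᵀ = H := hsym
    have h0 : Matrix.trace (H * S) ≥ 0 := by
      have := hle 0 (by exact Matrix.PosSemidef.zero)
      rw [hHT] at this
      simp only [zero_sub, Matrix.mul_neg, Matrix.trace_neg] at this
      linarith
    have h2 : Matrix.trace (H * S) ≤ 0 := by
      have := hle (S + S) (hS.add hS)
      rw [hHT] at this
      simpa [Matrix.mul_add, add_sub_cancel_right] using this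
    have htr0 : Matrix.trace (H * S) = 0 := le_antisymm h2 h0
    have hnH : (-H).PosSemidef := by
      refine Matrix.PosSemidef.of_dotProduct_mulVec_nonneg ?_ ?_
      · rw [herm_iff_symm]; exact hsym.neg
      · intro v
        have hz : (S + Matrix.vecMulVec v v).PosSemidef := hS.add (psd_vecMulVec v)
        have := hle _ hz
        rw [hHT, add_sub_cancel_left, trace_mul_vecMulVec] at this
        simp only [star_trivial, Matrix.neg_mulVec, dotProduct_neg]
        linarith
    refine ⟨hsym, hnH, ?_⟩
    have := psd_mul_eq_zero_of_trace_zero hnH hS (by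
      rw [Matrix.neg_mul, Matrix.trace_neg, htr0, neg_zero])
    rw [Matrix.neg_mul, neg_eq_zero] at this
    exact this
  · rintro ⟨hsym, hnH, hHS⟩
    refine ⟨hsym, fun z hz => ?_⟩
    have hHT : Hᵀ = H := hsym
    rw [hHT, Matrix.mul_sub, Matrix.trace_sub, hHS, Matrix.trace_zero, sub_zero]
    have := psd_trace_mul_nonneg hnH hz
    rw [Matrix.neg_mul, Matrix.trace_neg] at this
    linarith

section LA
variable {n : ℕ} {S : Matrix (Fin n) (Fin n) ℝ}

lemma dot_mulVec_symm (hS : Sᵀ = S) (w v : Fin n → ℝ) :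
    (S *ᵥ w) ⬝ᵥ v = w ⬝ᵥ (S *ᵥ v) := by
  rw [dotProduct_comm, Matrix.dotProduct_mulVec, ← Matrix.mulVec_transpose, hS, dotProduct_comm]

lemma ker_inf_range_symm (hS : Sᵀ = S) :
    LinearMap.ker S.mulVecLin ⊓ LinearMap.range S.mulVecLin = ⊥ := by
  rw [Submodule.eq_bot_iff]
  rintro v ⟨hker, hrange⟩
  obtain ⟨w, rfl⟩ := hrange
  have hker' : S *ᵥ (S.mulVecLin w) = 0 := hker
  have h : (S *ᵥ w) ⬝ᵥ (S *ᵥ w) = 0 := by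
    have := dot_mulVec_symm hS w (S.mulVecLin w)
    rw [Matrix.mulVecLin_apply] at *
    rw [this, hker', dotProduct_zero]
  rw [Matrix.mulVecLin_apply]
  ext i
  have hz := (Finset.sum_eq_zero_iff_of_nonneg (fun i _ => mul_self_nonneg ((S *ᵥ w) i))).mp h i
    (Finset.mem_univ i)
  simpa [mul_self_eq_zero] using hz

lemma ker_sup_range_symm (hS : Sᵀ = S) :
    LinearMap.ker S.mulVecLin ⊔ LinearMap.range S.mulVecLin = ⊤ := by
  apply Submodule.eq_top_of_finrank_eq
  have h1 := Submodule.finrank_sup_add_finrank_inf_eq (LinearMap.ker S.mulVecLin)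
    (LinearMap.range S.mulVecLin)
  rw [ker_inf_range_symm hS] at h1
  have h2 := LinearMap.finrank_range_add_finrank_ker S.mulVecLin
  simp only [finrank_bot, add_zero] at h1
  rw [h1, add_comm, h2]

lemma quad_reduce (hS : Sᵀ = S) {H : Matrix (Fin n) (Fin n) ℝ} (hsym : Hᵀ = H)
    (hHS : H * S = 0) (w : Fin n → ℝ) :
    ∃ v, S *ᵥ v = 0 ∧ w ⬝ᵥ (H *ᵥ w) = v ⬝ᵥ (H *ᵥ v) := by
  have hw : w ∈ LinearMap.ker S.mulVecLin ⊔ LinearMap.range S.mulVecLin := by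
    rw [ker_sup_range_symm hS]; trivial
  obtain ⟨v, hv, u, hu, rfl⟩ := Submodule.mem_sup.mp hw
  have hvker : S *ᵥ v = 0 := hv
  obtain ⟨z, rfl⟩ := hu
  have hHu : H *ᵥ (S.mulVecLin z) = 0 := by
    rw [Matrix.mulVecLin_apply, Matrix.mulVec_mulVec, hHS, Matrix.zero_mulVec]
  refine ⟨v, hvker, ?_⟩
  rw [Matrix.mulVec_add, hHu, add_zero, add_dotProduct]
  have h1 : S.mulVecLin z ⬝ᵥ (H *ᵥ v) = 0 := by
    rw [dotProduct_comm, dot_mulVec_symm hsym v (S.mulVecLin z), hHu, dotProduct_zero]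
  rw [h1, add_zero]

lemma kerX_eq_rangeS {X : Matrix (Fin n) (Fin n) ℝ} (hXS0 : X * S = 0)
    (hrank : X.rank + S.rank = n) :
    LinearMap.ker X.mulVecLin = LinearMap.range S.mulVecLin := by
  have hle : LinearMap.range S.mulVecLin ≤ LinearMap.ker X.mulVecLin := by
    rintro u ⟨w, rfl⟩
    show X *ᵥ (S.mulVecLin w) = 0
    rw [Matrix.mulVecLin_apply, Matrix.mulVec_mulVec, hXS0, Matrix.zero_mulVec]
  have h2 := LinearMap.finrank_range_add_finrank_ker X.mulVecLin
  rw [Module.finrank_fintype_fun_eq_card, Fintype.card_fin] at h2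
  have hXr : X.rank = Module.finrank ℝ (LinearMap.range X.mulVecLin) := rfl
  have hSr : S.rank = Module.finrank ℝ (LinearMap.range S.mulVecLin) := rfl
  rw [hXr, hSr] at hrank
  exact (Submodule.eq_of_le_of_finrank_eq hle (by omega)).symm

lemma pos_on_ker {X : Matrix (Fin n) (Fin n) ℝ} (hX : X.PosSemidef) (hS : S.PosSemidef)
    (hXS0 : X * S = 0) (hrank : X.rank + S.rank = n) {v : Fin n → ℝ}
    (hv : S *ᵥ v = 0) (hv0 : v ≠ 0) : 0 < v ⬝ᵥ (X *ᵥ v) := by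
  have hge : 0 ≤ v ⬝ᵥ (X *ᵥ v) := by simpa using hX.dotProduct_mulVec_nonneg v
  rcases hge.lt_or_eq with h | h
  · exact h
  · exfalso
    have hXv : X *ᵥ v = 0 := by
      have := (hX.dotProduct_mulVec_zero_iff v).mp (by simpa using h.symm)
      exact this
    have hmem : v ∈ LinearMap.ker S.mulVecLin ⊓ LinearMap.range S.mulVecLin := by
      refine ⟨hv, ?_⟩
      rw [← kerX_eq_rangeS hXS0 hrank]
      exact hXv
    rw [ker_inf_range_symm (herm_iff_symm.mp hS.1)] at hmem
    exact hv0 hmem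

lemma exists_common_kernel {X : Matrix (Fin n) (Fin n) ℝ} (hXS0 : X * S = 0)
    (hne : X.rank + S.rank ≠ n) :
    ∃ v : Fin n → ℝ, v ≠ 0 ∧ S *ᵥ v = 0 ∧ X *ᵥ v = 0 := by
  have hle : X.rank + S.rank ≤ n := by
    simpa using Matrix.rank_add_rank_le_card_of_mul_eq_zero hXS0
  have hlt : X.rank + S.rank < n := lt_of_le_of_ne hle hne
  have h1 := Submodule.finrank_sup_add_finrank_inf_eq (LinearMap.ker X.mulVecLin)
    (LinearMap.ker S.mulVecLin)
  have h2 := LinearMap.finrank_range_add_finrank_ker X.mulVecLin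
  have h3 := LinearMap.finrank_range_add_finrank_ker S.mulVecLin
  rw [Module.finrank_fintype_fun_eq_card, Fintype.card_fin] at h2 h3
  have hXr : X.rank = Module.finrank ℝ (LinearMap.range X.mulVecLin) := rfl
  have hSr : S.rank = Module.finrank ℝ (LinearMap.range S.mulVecLin) := rfl
  rw [hXr, hSr] at hlt
  have hsup : Module.finrank ℝ (LinearMap.ker X.mulVecLin ⊔ LinearMap.ker S.mulVecLin :
      Submodule ℝ (Fin n → ℝ)) ≤ n := by
    have := Submodule.finrank_le (LinearMap.ker X.mulVecLin ⊔ LinearMap.ker S.mulVecLin)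
    rwa [Module.finrank_fintype_fun_eq_card, Fintype.card_fin] at this
  have hpos : 0 < Module.finrank ℝ (LinearMap.ker X.mulVecLin ⊓ LinearMap.ker S.mulVecLin :
      Submodule ℝ (Fin n → ℝ)) := by omega
  obtain ⟨x, hx⟩ := Module.finrank_pos_iff_exists_ne_zero.mp hpos
  refine ⟨x.1, fun h => hx (Subtype.ext h), x.2.2, x.2.1⟩

lemma isCompact_sphereKer (S : Matrix (Fin n) (Fin n) ℝ) :
    IsCompact {v : Fin n → ℝ | S *ᵥ v = 0 ∧ v ⬝ᵥ v = 1} := by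
  apply IsCompact.of_isClosed_subset (isCompact_closedBall (0 : Fin n → ℝ) 1)
  · apply IsClosed.inter
    · exact isClosed_eq (continuous_const.matrix_mulVec continuous_id) continuous_const
    · exact isClosed_eq (continuous_id.dotProduct continuous_id) continuous_const
  · rintro v ⟨-, hv1⟩
    rw [Metric.mem_closedBall, dist_zero_right]
    rw [pi_norm_le_iff_of_nonneg zero_le_one]
    intro i
    rw [Real.norm_eq_abs, abs_le_one_iff_mul_self_le_one]
    calc v i * v i ≤ ∑ j, v j * v j :=
          Finset.single_le_sum (fun j _ => mul_self_nonneg (v j)) (Finset.mem_univ i)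
    _ = 1 := hv1

lemma isOpen_negdef {K : Set (Fin n → ℝ)} (hK : IsCompact K) :
    IsOpen {H : Matrix (Fin n) (Fin n) ℝ | ∀ v ∈ K, v ⬝ᵥ (H *ᵥ v) < 0} := by
  rw [isOpen_iff_mem_nhds]
  intro H₀ hH₀
  have hf : Continuous fun p : Matrix (Fin n) (Fin n) ℝ × (Fin n → ℝ) => p.2 ⬝ᵥ (p.1 *ᵥ p.2) :=
    continuous_snd.dotProduct (continuous_fst.matrix_mulVec continuous_snd)
  have hU : IsOpen ((fun p : Matrix (Fin n) (Fin n) ℝ × (Fin n → ℝ) => p.2 ⬝ᵥ (p.1 *ᵥ p.2)) ⁻¹'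
      Set.Iio 0) := isOpen_Iio.preimage hf
  have hsub : {H₀} ×ˢ K ⊆ (fun p : Matrix (Fin n) (Fin n) ℝ × (Fin n → ℝ) =>
      p.2 ⬝ᵥ (p.1 *ᵥ p.2)) ⁻¹' Set.Iio 0 := by
    rintro ⟨H, v⟩ ⟨hH, hv⟩
    rcases hH with rfl
    exact hH₀ v hv
  obtain ⟨U, W, hUo, hWo, hHU, hKW, hUW⟩ :=
    generalized_tube_lemma isCompact_singleton hK hU hsub
  refine Filter.mem_of_superset (hUo.mem_nhds (hHU rfl)) ?_
  intro H hH v hv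
  exact hUW (Set.mk_mem_prod hH (hKW hv))

lemma dot_self_pos {v : Fin n → ℝ} (hv : v ≠ 0) : 0 < v ⬝ᵥ v := by
  rcases (Finset.sum_nonneg fun i (_ : i ∈ Finset.univ) => mul_self_nonneg (v i)).lt_or_eq
    with h | h
  · exact h
  · exfalso
    apply hv
    ext i
    have := (Finset.sum_eq_zero_iff_of_nonneg (fun i _ => mul_self_nonneg (v i))).mp h.symm i
      (Finset.mem_univ i)
    simpa [mul_self_eq_zero] using this

lemma vecMulVec_mul_eq_zero (hSsymm : Sᵀ = S) {v : Fin n → ℝ} (hv : S *ᵥ v = 0) :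
    Matrix.vecMulVec v v * S = 0 := by
  have hvS : v ᵥ* S = 0 := by rw [← hSsymm, Matrix.vecMul_transpose]; exact hv
  ext i j
  have hj : ∑ k, v k * S k j = 0 := by
    have := congrFun hvS j
    simpa [Matrix.vecMul, dotProduct] using this
  simp only [Matrix.mul_apply, Matrix.vecMulVec_apply, Matrix.zero_apply, mul_assoc,
    ← Finset.mul_sum]
  rw [hj, mul_zero]

lemma vecMulVec_mulVec_self (v : Fin n → ℝ) :
    Matrix.vecMulVec v v *ᵥ v = (v ⬝ᵥ v) • v := by
  ext i
  simp only [Matrix.mulVec, Matrix.vecMulVec_apply, dotProduct, Pi.smul_apply,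
    smul_eq_mul, mul_assoc]
  rw [← Finset.mul_sum, mul_comm]

def symmKerSubmodule (S : Matrix (Fin n) (Fin n) ℝ) :
    Submodule ℝ (Matrix (Fin n) (Fin n) ℝ) where
  carrier := {H | H.IsSymm ∧ H * S = 0}
  add_mem' := by
    rintro a b ⟨ha1, ha2⟩ ⟨hb1, hb2⟩
    refine ⟨?_, by rw [Matrix.add_mul, ha2, hb2, add_zero]⟩
    rw [Matrix.IsSymm, Matrix.transpose_add, ha1, hb1]
  zero_mem' := ⟨by rw [Matrix.IsSymm, Matrix.transpose_zero], by rw [Matrix.zero_mul]⟩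
  smul_mem' := by
    rintro c x ⟨h1, h2⟩
    refine ⟨?_, by rw [Matrix.smul_mul, h2, smul_zero]⟩
    rw [Matrix.IsSymm, Matrix.transpose_smul, h1]

end LA

theorem stmt5 {n : ℕ} (X S : Matrix (Fin n) (Fin n) ℝ)
    (hX : X.PosSemidef) (hS : S.PosSemidef)
    (hXS : Matrix.trace (Xᵀ * S) = 0) :
    -X ∈ intrinsicInterior ℝ
        (matNormalCone {Y : Matrix (Fin n) (Fin n) ℝ | Y.PosSemidef} S) ↔
      X.rank + S.rank = n := by
  have hXsymm : Xᵀ = X := herm_iff_symm.mp hX.1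
  have hSsymm : Sᵀ = S := herm_iff_symm.mp hS.1
  have hXS0 : X * S = 0 := psd_mul_eq_zero_of_trace_zero hX hS (by rwa [hXsymm] at hXS)
  set N := matNormalCone {Y : Matrix (Fin n) (Fin n) ℝ | Y.PosSemidef} S with hNdef
  have hNeq : N = {H | H.IsSymm ∧ (-H).PosSemidef ∧ H * S = 0} := normalCone_eq hS
  have hmemN : -X ∈ N := by
    rw [hNeq]
    refine ⟨?_, by rw [neg_neg]; exact hX, by rw [Matrix.neg_mul, hXS0, neg_zero]⟩
    rw [Matrix.IsSymm, Matrix.transpose_neg, hXsymm]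
  have h0N : (0 : Matrix (Fin n) (Fin n) ℝ) ∈ N := by
    rw [hNeq]
    exact ⟨by rw [Matrix.IsSymm, Matrix.transpose_zero], by rw [neg_zero]; exact .zero,
      by rw [Matrix.zero_mul]⟩
  constructor
  · -- interior → rank
    intro hmem
    by_contra hne
    obtain ⟨v, hv0, hvS, hvX⟩ := exists_common_kernel hXS0 hne
    obtain ⟨y, hy, hyval⟩ := mem_intrinsicInterior.mp hmem
    set M := Matrix.vecMulVec v v with hM
    have hnegM : -M ∈ N := by
      rw [hNeq]
      refine ⟨?_, by rw [neg_neg]; exact psd_vecMulVec v,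
        by rw [Matrix.neg_mul, vecMulVec_mul_eq_zero hSsymm hvS, neg_zero]⟩
      rw [Matrix.IsSymm, Matrix.transpose_neg]
      have := herm_iff_symm.mp (psd_vecMulVec v).1
      rw [this]
    have hmema : ∀ t : ℝ, t • M + (-X) ∈ affineSpan ℝ N := by
      intro t
      have := AffineSubspace.smul_vsub_vadd_mem (affineSpan ℝ N) t
        (subset_affineSpan ℝ N h0N) (subset_affineSpan ℝ N hnegM)
        (subset_affineSpan ℝ N hmemN)
      simpa [vsub_eq_sub, vadd_eq_add] using this
    set γ : ℝ → (affineSpan ℝ N : Set (Matrix (Fin n) (Fin n) ℝ)) :=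
      fun t => ⟨t • M + (-X), hmema t⟩ with hγ
    have hcont : Continuous γ :=
      Continuous.subtype_mk ((continuous_id.smul continuous_const).add continuous_const) _
    have hγ0 : γ 0 = y := by
      apply Subtype.ext
      simp [hγ, hyval]
    have hev : ∀ᶠ t in nhds (0 : ℝ), γ t ∈ interior (Subtype.val ⁻¹' N) := by
      have hnhds : interior (Subtype.val ⁻¹' N) ∈ nhds (γ 0) := by
        rw [hγ0]
        exact isOpen_interior.mem_nhds hy
      exact hcont.continuousAt.eventually_mem hnhds
    have hev2 : ∀ᶠ t in nhdsWithin (0 : ℝ) (Set.Ioi 0),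
        ((γ t : Matrix (Fin n) (Fin n) ℝ) ∈ N ∧ t ∈ Set.Ioi (0:ℝ)) := by
      refine Filter.Eventually.and ?_ self_mem_nhdsWithin
      exact nhdsWithin_le_nhds (hev.mono fun t ht => Set.mem_preimage.mp (interior_subset ht))
    obtain ⟨t, htN, ht⟩ := hev2.exists
    have htN2 : (γ t : Matrix (Fin n) (Fin n) ℝ) ∈
        {H : Matrix (Fin n) (Fin n) ℝ | H.IsSymm ∧ (-H).PosSemidef ∧ H * S = 0} := by
      rw [← hNeq]; exact htN
    obtain ⟨-, hpsd, -⟩ := htN2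
    have hquad := hpsd.dotProduct_mulVec_nonneg v
    have he : -(t • M + -X) = X - t • M := by abel
    rw [star_trivial, he, Matrix.sub_mulVec, Matrix.smul_mulVec, hM,
      vecMulVec_mulVec_self, hvX, dotProduct_sub, dotProduct_zero, dotProduct_smul,
      dotProduct_smul] at hquad
    have hvv : 0 < v ⬝ᵥ v := dot_self_pos hv0
    rw [Set.mem_Ioi] at ht
    simp only [smul_eq_mul] at hquad
    nlinarith [mul_pos ht (mul_pos hvv hvv)]
  · -- rank → interior
    intro hrank
    have hNV : N ⊆ (symmKerSubmodule S).toAffineSubspace := by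
      intro H hH
      rw [hNeq] at hH
      exact Submodule.mem_toAffineSubspace.mpr ⟨hH.1, hH.2.2⟩
    have hspan : affineSpan ℝ N ≤ (symmKerSubmodule S).toAffineSubspace :=
      affineSpan_le.mpr hNV
    set K := {w : Fin n → ℝ | S *ᵥ w = 0 ∧ w ⬝ᵥ w = 1} with hK
    set O := {H : Matrix (Fin n) (Fin n) ℝ | ∀ w ∈ K, w ⬝ᵥ (H *ᵥ w) < 0} with hO
    have hOopen : IsOpen O := isOpen_negdef (isCompact_sphereKer S)
    have hXO : -X ∈ O := by
      intro w hw
      have hw0 : w ≠ 0 := by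
        intro h
        rw [hK] at hw
        rw [h] at hw
        simpa using hw.2
      have hpos := pos_on_ker hX hS hXS0 hrank hw.1 hw0
      rw [Matrix.neg_mulVec, dotProduct_neg]
      linarith
    have hON : ∀ H, H ∈ O → H ∈ symmKerSubmodule S → H ∈ N := by
      intro H hHO hHV
      obtain ⟨hHsymm, hHS⟩ := hHV
      rw [hNeq]
      refine ⟨hHsymm, Matrix.PosSemidef.of_dotProduct_mulVec_nonneg ?_ ?_, hHS⟩
      · rw [herm_iff_symm, Matrix.IsSymm, Matrix.transpose_neg, hHsymm]
      · intro w
        obtain ⟨u, huk, hq⟩ := quad_reduce hSsymm hHsymm hHS w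
        rw [star_trivial, Matrix.neg_mulVec, dotProduct_neg, hq]
        rcases eq_or_ne u 0 with rfl | hu0
        · simp
        · have huu : 0 < u ⬝ᵥ u := dot_self_pos hu0
          set a : ℝ := (Real.sqrt (u ⬝ᵥ u))⁻¹ with ha
          have hsq : Real.sqrt (u ⬝ᵥ u) * Real.sqrt (u ⬝ᵥ u) = u ⬝ᵥ u :=
            Real.mul_self_sqrt huu.le
          have hsqpos : 0 < Real.sqrt (u ⬝ᵥ u) := Real.sqrt_pos.mpr huu
          have hapos : 0 < a := inv_pos.mpr hsqpos
          have hmemK : a • u ∈ K := by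
            constructor
            · rw [Matrix.mulVec_smul, huk, smul_zero]
            · rw [smul_dotProduct, dotProduct_smul, smul_eq_mul, smul_eq_mul, ha]
              field_simp
              rw [sq, hsq]
          have := hHO (a • u) hmemK
          rw [smul_dotProduct, Matrix.mulVec_smul, dotProduct_smul, smul_eq_mul,
            smul_eq_mul] at this
          nlinarith [mul_pos hapos hapos, this]
    rw [mem_intrinsicInterior]
    refine ⟨⟨-X, subset_affineSpan ℝ N hmemN⟩, ?_, rfl⟩
    have hsub : (Subtype.val ⁻¹' O : Set (affineSpan ℝ N)) ⊆ Subtype.val ⁻¹' N := by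
      intro z hz
      exact hON z.1 hz (Submodule.mem_toAffineSubspace.mp (hspan z.2))
    exact interior_maximal hsub (hOopen.preimage continuous_subtype_val) hXO
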